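/- The transcendental equation (π^2 + 3λ) log((√(π^2 - 6λ) + π)/(√(π^2 - 6λ) - π)) - 3π√(π^2 - 6λ) = 0 has exactly one solution λ₁ in (-∞, 0), i.e., the function F(λ) = (π^2 + 3λ) log((√(π^2 - 6λ) + π)/(√(π^2 - 6λ) - π)) - 3π√(π^2 - 6λ) has a unique zero on λ < 0. -/

import Mathlib

open Real

noncomputable def Fe (l : ℝ) : ℝ :=
  (π ^ 2 + 3 * l) *
      Real.log ((Real.sqrt (π ^ 2 - 6 * l) + π) / (Real.sqrt (π ^ 2 - 6 * l) - π))
    - 3 * π * Real.sqrt (π ^ 2 - 6 * l)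

noncomputable def ge (l : ℝ) : ℝ :=
  Real.log ((Real.sqrt (π ^ 2 - 6 * l) + π) / (Real.sqrt (π ^ 2 - 6 * l) - π))
    - 3 * π * Real.sqrt (π ^ 2 - 6 * l) / (π ^ 2 + 3 * l)

lemma s_gt {l : ℝ} (hl : l < 0) : π < Real.sqrt (π ^ 2 - 6 * l) := by
  have h1 : π ^ 2 < π ^ 2 - 6 * l := by nlinarith
  have h2 := Real.sqrt_lt_sqrt (sq_nonneg π) h1
  rwa [Real.sqrt_sq pi_pos.le] at h2

lemma ratio_gt_one {l : ℝ} (hl : l < 0) :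
    1 < (Real.sqrt (π ^ 2 - 6 * l) + π) / (Real.sqrt (π ^ 2 - 6 * l) - π) := by
  have hs := s_gt hl
  have hpi := pi_pos
  rw [one_lt_div (by linarith)]
  linarith

lemma zero_mem {l : ℝ} (hl : l < 0) (hF : Fe l = 0) : -π ^ 2 / 3 < l := by
  by_contra h
  push_neg at h
  have hs := s_gt hl
  have hpi := pi_pos
  have hL : 0 < Real.log ((Real.sqrt (π ^ 2 - 6 * l) + π) / (Real.sqrt (π ^ 2 - 6 * l) - π)) :=
    Real.log_pos (ratio_gt_one hl)
  have hc : π ^ 2 + 3 * l ≤ 0 := by linarith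
  have h1 : (π ^ 2 + 3 * l) *
      Real.log ((Real.sqrt (π ^ 2 - 6 * l) + π) / (Real.sqrt (π ^ 2 - 6 * l) - π)) ≤ 0 :=
    mul_nonpos_of_nonpos_of_nonneg hc hL.le
  have h2 : 0 < 3 * π * Real.sqrt (π ^ 2 - 6 * l) := by nlinarith
  have : Fe l < 0 := by unfold Fe; linarith
  linarith [this, hF]

lemma Fe_eq_mul {l : ℝ} (h : π ^ 2 + 3 * l ≠ 0) : Fe l = (π ^ 2 + 3 * l) * ge l := by
  unfold Fe ge
  field_simp

lemma ge_strictMono {l₁ l₂ : ℝ} (h1 : -π ^ 2 / 3 < l₁) (h12 : l₁ < l₂) (h2 : l₂ < 0) :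
    ge l₁ < ge l₂ := by
  have hpi := pi_pos
  have hl1 : l₁ < 0 := lt_trans h12 h2
  set s₁ := Real.sqrt (π ^ 2 - 6 * l₁) with hs₁def
  set s₂ := Real.sqrt (π ^ 2 - 6 * l₂) with hs₂def
  have hs₂ : π < s₂ := s_gt h2
  have hs₁ : π < s₁ := s_gt hl1
  have hs21 : s₂ < s₁ := by
    apply Real.sqrt_lt_sqrt (by nlinarith) (by linarith)
  have hd1 : 0 < π ^ 2 + 3 * l₁ := by nlinarith
  have hd2 : 0 < π ^ 2 + 3 * l₂ := by linarith
  have hlog : Real.log ((s₁ + π) / (s₁ - π)) < Real.log ((s₂ + π) / (s₂ - π)) := by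
    apply Real.log_lt_log (div_pos (by linarith) (by linarith))
    rw [div_lt_div_iff₀ (by linarith) (by linarith)]
    nlinarith
  have hfrac : 3 * π * s₂ / (π ^ 2 + 3 * l₂) < 3 * π * s₁ / (π ^ 2 + 3 * l₁) := by
    rw [div_lt_div_iff₀ hd2 hd1]
    have k1 : 3 * π * s₂ * (π ^ 2 + 3 * l₁) < 3 * π * s₁ * (π ^ 2 + 3 * l₁) := by
      nlinarith [mul_pos (show (0:ℝ) < s₁ - s₂ by linarith)
        (show (0:ℝ) < 3 * π * (π ^ 2 + 3 * l₁) by positivity)]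
    have k2 : 3 * π * s₁ * (π ^ 2 + 3 * l₁) < 3 * π * s₁ * (π ^ 2 + 3 * l₂) := by
      nlinarith [mul_pos (show (0:ℝ) < 3 * π * s₁ by nlinarith)
        (show (0:ℝ) < 3 * (l₂ - l₁) by linarith)]
    linarith
  unfold ge
  rw [← hs₁def, ← hs₂def]
  linarith

lemma sqrt_a : Real.sqrt (π ^ 2 - 6 * (-5 * π ^ 2 / 24)) = 3 * π / 2 := by
  rw [show π ^ 2 - 6 * (-5 * π ^ 2 / 24) = (3 * π / 2) ^ 2 by ring]
  exact Real.sqrt_sq (by positivity)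

lemma sqrt_b : Real.sqrt (π ^ 2 - 6 * (-67 * π ^ 2 / 20000)) = 101 * π / 100 := by
  rw [show π ^ 2 - 6 * (-67 * π ^ 2 / 20000) = (101 * π / 100) ^ 2 by ring]
  exact Real.sqrt_sq (by positivity)

lemma Fe_a_neg : Fe (-5 * π ^ 2 / 24) < 0 := by
  have hpi := pi_pos
  unfold Fe
  rw [sqrt_a]
  have hr : (3 * π / 2 + π) / (3 * π / 2 - π) = 5 := by
    rw [div_eq_iff (by linarith)]; ring
  rw [hr]
  have hlog : Real.log 5 ≤ 4 := by
    have := Real.log_le_sub_one_of_pos (by norm_num : (0:ℝ) < 5)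
    linarith
  have hc : π ^ 2 + 3 * (-5 * π ^ 2 / 24) = 3 * π ^ 2 / 8 := by ring
  have hlogpos : 0 < Real.log 5 := Real.log_pos (by norm_num)
  nlinarith [sq_nonneg π]

lemma Fe_b_pos : 0 < Fe (-67 * π ^ 2 / 20000) := by
  have hpi := pi_pos
  unfold Fe
  rw [sqrt_b]
  have hr : (101 * π / 100 + π) / (101 * π / 100 - π) = 201 := by
    rw [div_eq_iff (by linarith)]; ring
  rw [hr]
  have hlog : (4:ℝ) < Real.log 201 := by
    have h1 : Real.log 128 ≤ Real.log 201 :=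
      Real.log_le_log (by norm_num) (by norm_num)
    have h2 : Real.log 128 = 7 * Real.log 2 := by
      rw [show (128:ℝ) = 2 ^ 7 by norm_num, Real.log_pow]
      norm_num
    have h3 := Real.log_two_gt_d9
    nlinarith
  nlinarith [sq_nonneg π]

theorem unique_negative_eigenvalue :
    ∃! l : ℝ, l < 0 ∧
      (π ^ 2 + 3 * l) *
          Real.log ((Real.sqrt (π ^ 2 - 6 * l) + π) / (Real.sqrt (π ^ 2 - 6 * l) - π))
        - 3 * π * Real.sqrt (π ^ 2 - 6 * l) = 0 := by
  have hpi := pi_pos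
  set a : ℝ := -5 * π ^ 2 / 24 with ha
  set b : ℝ := -67 * π ^ 2 / 20000 with hb
  have hab : a ≤ b := by nlinarith
  have hb0 : b < 0 := by nlinarith
  -- continuity of Fe on Icc a b
  have hs_cont : Continuous fun l : ℝ => Real.sqrt (π ^ 2 - 6 * l) := by
    apply Real.continuous_sqrt.comp
    continuity
  have hmem : ∀ x ∈ Set.Icc a b, x < 0 := fun x hx => lt_of_le_of_lt hx.2 hb0
  have hcont : ContinuousOn Fe (Set.Icc a b) := by
    unfold Fe
    apply ContinuousOn.sub
    · apply ContinuousOn.mul (by fun_prop)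
      apply ContinuousOn.log
      · apply ContinuousOn.div
        · exact (hs_cont.add continuous_const).continuousOn
        · exact (hs_cont.sub continuous_const).continuousOn
        · intro x hx
          have := s_gt (hmem x hx)
          linarith
      · intro x hx
        have h1 := ratio_gt_one (hmem x hx)
        linarith
    · exact (continuous_const.mul hs_cont).continuousOn
  have hivt := intermediate_value_Icc hab hcont
  have h0mem : (0:ℝ) ∈ Set.Icc (Fe a) (Fe b) := ⟨Fe_a_neg.le, Fe_b_pos.le⟩
  obtain ⟨c, hc, hFc⟩ := hivt h0mem
  have hc0 : c < 0 := hmem c hc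
  have hcI : -π ^ 2 / 3 < c := zero_mem hc0 hFc
  have hdc : 0 < π ^ 2 + 3 * c := by nlinarith
  have hgc : ge c = 0 := by
    have := Fe_eq_mul (l := c) (by linarith)
    rw [hFc] at this
    exact (mul_eq_zero.mp this.symm).resolve_left (by linarith)
  refine ⟨c, ⟨hc0, hFc⟩, ?_⟩
  rintro y ⟨hy0, hFy⟩
  have hFy' : Fe y = 0 := hFy
  have hyI : -π ^ 2 / 3 < y := zero_mem hy0 hFy'
  have hdy : 0 < π ^ 2 + 3 * y := by nlinarith
  have hgy : ge y = 0 := by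
    have := Fe_eq_mul (l := y) (by linarith)
    rw [hFy'] at this
    exact (mul_eq_zero.mp this.symm).resolve_left (by linarith)
  rcases lt_trichotomy y c with h | h | h
  · have := ge_strictMono hyI h hc0
    rw [hgy, hgc] at this; linarith
  · exact h
  · have := ge_strictMono hcI h hy0
    rw [hgy, hgc] at this; linarith
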